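/- Let G be a countable group, A and B finite sets, Y ⊆ A^G a D-irreducible subshift, and φ : Y → B^G a continuous G-equivariant map. Let F ⊆ G be a finite set such that φ(y)(1_G) depends only on y|_F. Then the image Z = φ[Y] is a DF-irreducible subshift of B^G. -/
import Mathlib


open Set Pointwise

/-- The right shift action of `G` on `A^G`: `(g · s)(h) = s(hg)`. -/
def rshift {G A : Type*} [Group G] (g : G) (s : G → A) : G → A := fun h => s (h * g)

/-- A subshift `Y ⊆ A^G` is `D`-irreducible: any two patterns occurring in `Y`
on finite sets `F₀, F₁` which are `D`-apart can be jointly realized in `Y`. -/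
def IrreducibleSubshift {G A : Type*} [Group G] (D : Set G) (Y : Set (G → A)) : Prop :=
  ∀ F₀ F₁ : Set G, F₀.Finite → F₁.Finite → Disjoint (D * F₀) (D * F₁) →
    ∀ y₀ ∈ Y, ∀ y₁ ∈ Y, ∃ y ∈ Y, (∀ f ∈ F₀, y f = y₀ f) ∧ (∀ f ∈ F₁, y f = y₁ f)

theorem stmt10 {G A B : Type*} [Group G] [Countable G] [Finite A] [Finite B]
    [TopologicalSpace A] [DiscreteTopology A] [TopologicalSpace B] [DiscreteTopology B]
    (Y : Set (G → A)) (hYcl : IsClosed Y) (hYinv : ∀ g : G, rshift g '' Y = Y)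
    (D : Set G) (hD : D.Finite) (hDsym : ∀ d ∈ D, d⁻¹ ∈ D) (hD1 : (1 : G) ∈ D)
    (hIrr : IrreducibleSubshift D Y)
    (F : Set G) (hF : F.Finite)
    (φ : Y → (G → B)) (hφcont : Continuous φ)
    (hφequiv : ∀ (g : G) (y : Y) (hy : rshift g (y : G → A) ∈ Y),
      φ ⟨rshift g (y : G → A), hy⟩ = rshift g (φ y))
    (hwindow : ∀ y y' : Y, (∀ f ∈ F, (y : G → A) f = (y' : G → A) f) → φ y 1 = φ y' 1) :
    IrreducibleSubshift (D * F) (Set.range φ) ∧ IsClosed (Set.range φ) ∧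
      ∀ g : G, rshift g '' Set.range φ = Set.range φ := by
  have hmem : ∀ (g : G) (y : G → A), y ∈ Y → rshift g y ∈ Y := by
    intro g y hy
    rw [← hYinv g]
    exact ⟨y, hy, rfl⟩
  have hwin : ∀ (y y' : Y) (g : G),
      (∀ f ∈ F, (y : G → A) (f * g) = (y' : G → A) (f * g)) → φ y g = φ y' g := by
    intro y y' g h
    have hy : rshift g (y : G → A) ∈ Y := hmem g _ y.2
    have hy' : rshift g (y' : G → A) ∈ Y := hmem g _ y'.2
    have key := hwindow ⟨_, hy⟩ ⟨_, hy'⟩ (fun f hf => h f hf)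
    rw [hφequiv g y hy, hφequiv g y' hy'] at key
    simpa [rshift] using key
  have hinv : ∀ g : G, rshift g '' Set.range φ = Set.range φ := by
    intro g
    ext z
    constructor
    · rintro ⟨_, ⟨y, rfl⟩, rfl⟩
      exact ⟨⟨rshift g y, hmem g _ y.2⟩, hφequiv g y _⟩
    · rintro ⟨y, rfl⟩
      refine ⟨rshift g⁻¹ (φ y), ⟨⟨rshift g⁻¹ y, hmem g⁻¹ _ y.2⟩, hφequiv g⁻¹ y _⟩, ?_⟩
      funext h
      simp [rshift, mul_assoc]
  haveI : CompactSpace Y := isCompact_iff_compactSpace.mp hYcl.isCompact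
  refine ⟨?_, (isCompact_range hφcont).isClosed, hinv⟩
  intro E₀ E₁ hE₀ hE₁ hdis z₀ hz₀ z₁ hz₁
  obtain ⟨y₀, rfl⟩ := hz₀
  obtain ⟨y₁, rfl⟩ := hz₁
  have hd : Disjoint (D * (F * E₀)) (D * (F * E₁)) := by rwa [← mul_assoc, ← mul_assoc]
  obtain ⟨y, hyY, h0, h1⟩ := hIrr (F * E₀) (F * E₁) (hF.mul hE₀) (hF.mul hE₁) hd y₀ y₀.2 y₁ y₁.2
  refine ⟨φ ⟨y, hyY⟩, ⟨_, rfl⟩, ?_, ?_⟩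
  · intro g hg
    exact hwin ⟨y, hyY⟩ y₀ g (fun f hf => h0 _ (mul_mem_mul hf hg))
  · intro g hg
    exact hwin ⟨y, hyY⟩ y₁ g (fun f hf => h1 _ (mul_mem_mul hf hg))
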